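/- Let T ∈ L(H) be an operator on a separable infinite-dimensional complex Hilbert space H and suppose λ ∈ ℂ belongs to the topological boundary ∂σ(T; H) of the spectrum of T. Then T − λI is not a universal operator. In particular, if σ(T; H) = ∂σ(T; H), then T − λI is not universal for any λ ∈ ℂ. -/

import Mathlib

noncomputable section

/-- Universal operator on a complex Hilbert space. -/
def IsUniversal {H : Type*} [NormedAddCommGroup H] [InnerProductSpace ℂ H]
    (U : H →L[ℂ] H) : Prop :=
  ∀ T : H →L[ℂ] H, ∃ M : Submodule ℂ H, IsClosed (M : Set H) ∧ (∀ x ∈ M, U x ∈ M) ∧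
    ∃ c : ℂ, c ≠ 0 ∧ ∃ J : H ≃L[ℂ] M, ∀ x : H, U (J x : H) = c • ((J (T x) : H))

section AuxUniversal

open scoped ENNReal
open TopologicalSpace Metric Set

variable {ι : Type*}

lemma diag_memℓp (d : ι → ℂ) (hd : ∀ i, ‖d i‖ ≤ 1) (f : lp (fun _ : ι => ℂ) 2) :
    Memℓp (fun i => d i * f i) 2 := by
  apply memℓp_gen
  have h2 : (0:ℝ) < (2 : ℝ≥0∞).toReal := by norm_num
  have hs := (lp.memℓp f).summable h2
  refine hs.of_nonneg_of_le (fun i => ?_) (fun i => ?_)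
  · positivity
  · apply Real.rpow_le_rpow (norm_nonneg _) ?_ (le_of_lt h2)
    calc ‖d i * f i‖ = ‖d i‖ * ‖f i‖ := norm_mul _ _
      _ ≤ 1 * ‖f i‖ := by gcongr; exact hd i
      _ = ‖f i‖ := one_mul _

def diagOp (d : ι → ℂ) (hd : ∀ i, ‖d i‖ ≤ 1) :
    lp (fun _ : ι => ℂ) 2 →L[ℂ] lp (fun _ : ι => ℂ) 2 :=
  LinearMap.mkContinuous
    { toFun := fun f => ⟨fun i => d i * f i, diag_memℓp d hd f⟩
      map_add' := fun f g => by
        apply lp.ext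
        funext i
        simp [lp.coeFn_add, mul_add]
        rfl
      map_smul' := fun c f => by
        apply lp.ext
        funext i
        simp [lp.coeFn_smul, mul_comm, mul_left_comm] }
    1 (fun f => by
      have h2 : (0:ℝ) < (2 : ℝ≥0∞).toReal := by norm_num
      rw [one_mul]
      apply lp.norm_le_of_tsum_le h2 (norm_nonneg f)
      rw [lp.norm_rpow_eq_tsum h2 f]
      apply Summable.tsum_le_tsum ?_ ((diag_memℓp d hd f).summable h2) ((lp.memℓp f).summable h2)
      intro i
      apply Real.rpow_le_rpow (norm_nonneg _) ?_ (le_of_lt h2)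
      calc ‖d i * f i‖ = ‖d i‖ * ‖f i‖ := norm_mul _ _
        _ ≤ 1 * ‖f i‖ := by gcongr; exact hd i
        _ = ‖f i‖ := one_mul _)

lemma diagOp_apply (d : ι → ℂ) (hd : ∀ i, ‖d i‖ ≤ 1) (f : lp (fun _ : ι => ℂ) 2) (j : ι) :
    (diagOp d hd f) j = d j * f j := rfl

lemma diagOp_single [DecidableEq ι] (d : ι → ℂ) (hd : ∀ i, ‖d i‖ ≤ 1) (i : ι) :
    diagOp d hd (lp.single 2 i (1:ℂ)) = d i • lp.single 2 i (1:ℂ) := by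
  apply lp.ext
  funext j
  rw [diagOp_apply, lp.coeFn_smul, Pi.smul_apply]
  rcases eq_or_ne j i with h | h
  · subst h; rw [lp.single_apply_self]; simp
  · rw [lp.single_apply_ne 2 i _ h]; simp

variable {H : Type*} [NormedAddCommGroup H] [InnerProductSpace ℂ H] [CompleteSpace H]

/-- On an infinite-dimensional separable Hilbert space there is an operator with
eigenvalues `u n`, where `u` has closure of range containing the open unit ball. -/
lemma exists_op_dense_eigen [TopologicalSpace.SeparableSpace H]
    (hinf : ¬ FiniteDimensional ℂ H) :
    ∃ (S : H →L[ℂ] H) (u : ℕ → ℂ),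
      (∀ x : ℂ, ‖x‖ < 1 → x ∈ closure (Set.range u)) ∧
      (∀ n : ℕ, ∃ v : H, v ≠ 0 ∧ S v = u n • v) := by
  classical
  obtain ⟨w, b, -⟩ := exists_hilbertBasis ℂ H
  have hw : w.Infinite := by
    intro hfin
    haveI := hfin.fintype
    exact hinf (Module.Finite.of_basis b.toOrthonormalBasis.toBasis)
  set g : ℕ ↪ w := hw.natEmbedding
  set v : ℕ → ℂ := denseSeq ℂ
  have hv : DenseRange v := denseRange_denseSeq ℂ
  set u : ℕ → ℂ := fun n => if ‖v n‖ ≤ 1 then v n else 0 with hu_def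
  have hu1 : ∀ n, ‖u n‖ ≤ 1 := by
    intro n
    simp only [hu_def]
    split <;> simp_all
  set d : ↥w → ℂ := fun i => if h : ∃ n, g n = i then u h.choose else 0 with hd_def
  have hd : ∀ i, ‖d i‖ ≤ 1 := by
    intro i
    simp only [hd_def]
    split
    · exact hu1 _
    · simp
  have hdg : ∀ n, d (g n) = u n := by
    intro n
    have hex : ∃ m, g m = g n := ⟨n, rfl⟩
    simp only [hd_def, dif_pos hex]
    congr 1
    exact g.injective hex.choose_spec
  set R := b.repr
  refine ⟨(R.symm.toContinuousLinearEquiv.toContinuousLinearMap).comp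
    ((diagOp d hd).comp R.toContinuousLinearEquiv.toContinuousLinearMap), u, ?_, ?_⟩
  · intro x hx
    rw [Metric.mem_closure_iff]
    intro ε hε
    have hpos : 0 < min ε (1 - ‖x‖) := lt_min hε (by linarith)
    obtain ⟨n, hn⟩ := hv.exists_dist_lt x hpos
    have hlt : dist x (v n) < min ε (1 - ‖x‖) := hn
    have h1 : ‖v n - x‖ < 1 - ‖x‖ := by
      have : dist x (v n) = ‖v n - x‖ := by rw [dist_comm, dist_eq_norm]
      have h2 := lt_of_lt_of_le hlt (min_le_right ε (1 - ‖x‖))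
      linarith [this ▸ h2]
    have hvn : ‖v n‖ ≤ 1 := by
      have h3 : ‖v n‖ - ‖x‖ ≤ ‖v n - x‖ := norm_sub_norm_le _ _
      linarith
    refine ⟨u n, Set.mem_range_self n, ?_⟩
    rw [hu_def]
    simp only [if_pos hvn]
    exact lt_of_lt_of_le hlt (min_le_left _ _)
  · intro n
    refine ⟨b (g n), b.orthonormal.ne_zero (g n), ?_⟩
    apply R.injective
    have happ : ∀ y : H,
        ((R.symm.toContinuousLinearEquiv.toContinuousLinearMap).comp
          ((diagOp d hd).comp R.toContinuousLinearEquiv.toContinuousLinearMap)) y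
          = R.symm (diagOp d hd (R y)) := fun y => rfl
    rw [happ, LinearIsometryEquiv.apply_symm_apply, map_smul]
    have : R (b (g n)) = lp.single 2 (g n) (1:ℂ) := b.repr_self (g n)
    rw [this, diagOp_single, hdg]


set_option linter.unusedSectionVars false in
lemma mem_spectrum_of_eigen {U : H →L[ℂ] H} {μ : ℂ} {x : H} (hx : x ≠ 0) (h : U x = μ • x) :
    μ ∈ spectrum ℂ U := by
  rw [spectrum.mem_iff]
  rintro ⟨un, hun⟩
  have hz : (algebraMap ℂ (H →L[ℂ] H) μ - U) x = 0 := by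
    rw [ContinuousLinearMap.sub_apply, h, Algebra.algebraMap_eq_smul_one,
      ContinuousLinearMap.smul_apply, ContinuousLinearMap.one_apply, sub_self]
  apply hx
  have h1 := congrArg (fun A : H →L[ℂ] H => A x) un.inv_mul
  simp only [ContinuousLinearMap.mul_apply, ContinuousLinearMap.one_apply] at h1
  rw [hun, hz, map_zero] at h1
  exact h1.symm

lemma universal_ball_subset [TopologicalSpace.SeparableSpace H]
    (hinf : ¬ FiniteDimensional ℂ H) {U : H →L[ℂ] H} (hU : IsUniversal U) :
    ∃ c : ℂ, c ≠ 0 ∧ Metric.ball (0:ℂ) ‖c‖ ⊆ spectrum ℂ U := by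
  obtain ⟨S, u, hdense, heig⟩ := exists_op_dense_eigen hinf
  obtain ⟨M, hMc, hMi, c, hc, J, hJ⟩ := hU S
  refine ⟨c, hc, ?_⟩
  have hev : ∀ n, (c * u n) ∈ spectrum ℂ U := by
    intro n
    obtain ⟨x, hx0, hSx⟩ := heig n
    have hJx : ((J x : M) : H) ≠ 0 := by
      simp only [ne_eq, Submodule.coe_eq_zero]
      intro h
      exact hx0 (by simpa using congrArg J.symm h)
    apply mem_spectrum_of_eigen hJx
    rw [hJ x, hSx, map_smul]
    rw [Submodule.coe_smul, smul_smul]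
  intro μ hμ
  have hcpos : 0 < ‖c‖ := norm_pos_iff.mpr hc
  have hcs : IsClosed (spectrum ℂ U) := spectrum.isClosed U
  have hx : ‖c⁻¹ * μ‖ < 1 := by
    rw [Metric.mem_ball, dist_zero_right] at hμ
    rw [norm_mul, norm_inv]
    calc ‖c‖⁻¹ * ‖μ‖ < ‖c‖⁻¹ * ‖c‖ := by
          apply mul_lt_mul_of_pos_left hμ (inv_pos.mpr hcpos)
      _ = 1 := inv_mul_cancel₀ (ne_of_gt hcpos)
  have hmem : (c⁻¹ * μ) ∈ closure (Set.range u) := hdense _ hx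
  have hμeq : μ = c * (c⁻¹ * μ) := by field_simp
  have hμcl : μ ∈ closure (Set.range fun n => c * u n) := by
    have hmap := (Homeomorph.mulLeft₀ c hc).image_closure (Set.range u)
    have hmem2 : c * (c⁻¹ * μ) ∈ (Homeomorph.mulLeft₀ c hc) '' closure (Set.range u) :=
      ⟨_, hmem, rfl⟩
    rw [hmap] at hmem2
    rw [hμeq]
    have himg : (Homeomorph.mulLeft₀ c hc) '' (Set.range u) = Set.range fun n => c * u n := by
      ext y
      simp [Homeomorph.mulLeft₀, Set.mem_image, Set.mem_range]
      rfl
    rwa [himg] at hmem2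
  exact hcs.closure_subset_iff.mpr (Set.range_subset_iff.mpr hev) hμcl

end AuxUniversal

/-- If `λ` lies on the boundary of the spectrum of `T`, then `T - λI` is not universal.
In particular, if the spectrum equals its boundary, then `T - λI` is not universal for
any `λ ∈ ℂ`. -/
theorem not_universal_of_boundary_spectrum {H : Type*} [NormedAddCommGroup H]
    [InnerProductSpace ℂ H] [CompleteSpace H] [TopologicalSpace.SeparableSpace H]
    (hinf : ¬ FiniteDimensional ℂ H)
    (T : H →L[ℂ] H) :
    (∀ z ∈ frontier (spectrum ℂ T), ¬ IsUniversal (T - z • (1 : H →L[ℂ] H))) ∧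
    (spectrum ℂ T = frontier (spectrum ℂ T) →
      ∀ z : ℂ, ¬ IsUniversal (T - z • (1 : H →L[ℂ] H))) := by

  have hspec : ∀ z : ℂ,
      spectrum ℂ (T - z • (1 : H →L[ℂ] H)) = (fun x => x - z) '' spectrum ℂ T := by
    intro z
    have h := spectrum.sub_singleton_eq (R := ℂ) T z
    rw [Algebra.algebraMap_eq_smul_one] at h
    rw [← h, Set.sub_singleton]
  have h1 : ∀ z ∈ frontier (spectrum ℂ T), ¬ IsUniversal (T - z • (1 : H →L[ℂ] H)) := by
    intro z hz hU
    obtain ⟨c, hc, hball⟩ := universal_ball_subset hinf hU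
    have h0i : (0:ℂ) ∈ interior (spectrum ℂ (T - z • (1 : H →L[ℂ] H))) :=
      interior_maximal hball Metric.isOpen_ball
        (Metric.mem_ball_self (norm_pos_iff.mpr hc))
    have h0f : (0:ℂ) ∈ frontier (spectrum ℂ (T - z • (1 : H →L[ℂ] H))) := by
      have himg : (fun x : ℂ => x - z) '' frontier (spectrum ℂ T)
          = frontier ((fun x : ℂ => x - z) '' spectrum ℂ T) := by
        have := (Homeomorph.subRight z).image_frontier (spectrum ℂ T)
        simpa using this
      rw [hspec z, ← himg]
      exact ⟨z, hz, by simp⟩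
    exact h0f.2 h0i
  refine ⟨h1, ?_⟩
  intro heq z hU
  obtain ⟨c, hc, hball⟩ := universal_ball_subset hinf hU
  have h0 : (0:ℂ) ∈ spectrum ℂ (T - z • (1 : H →L[ℂ] H)) :=
    hball (Metric.mem_ball_self (norm_pos_iff.mpr hc))
  rw [hspec z] at h0
  obtain ⟨x, hxσ, hxz⟩ := h0
  have hxzz : x = z := by
    have h2 : x - z = 0 := hxz
    exact sub_eq_zero.mp h2
  subst hxzz
  exact h1 x (heq ▸ hxσ) hU

end
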